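/- For nonnegative integers $k_1,\dots,k_5$, if at least three of the $k_i$ are nonzero, then $-7 + (2s_1 - 4)s_1 + (s_1 - 3)s_2 + s_3 \geq 0$, where $s_j$ denotes the $j$th elementary symmetric polynomial in $k_1,\dots,k_5$. -/
import Mathlib


/-- The `j`th elementary symmetric polynomial of `k : Fin 5 → ℕ`, as an integer. -/
def S (k : Fin 5 → ℕ) (j : ℕ) : ℤ :=
  ∑ P ∈ Finset.powersetCard j (Finset.univ : Finset (Fin 5)), ∏ i ∈ P, (k i : ℤ)

theorem genus2_three_nonzero (k : Fin 5 → ℕ)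
    (h : 3 ≤ (Finset.univ.filter (fun i => k i ≠ 0)).card) :
    0 ≤ -7 + (2 * S k 1 - 4) * S k 1 + (S k 1 - 3) * S k 2 + S k 3 := by
  obtain ⟨T, hT, hTcard⟩ := Finset.exists_subset_card_eq h
  have hTpos : ∀ i ∈ T, 1 ≤ (k i : ℤ) := by
    intro i hi
    have := hT hi
    simp only [Finset.mem_filter] at this
    exact_mod_cast Nat.one_le_iff_ne_zero.mpr this.2
  have h2 : 0 ≤ S k 2 := by
    apply Finset.sum_nonneg
    intro P _
    exact Finset.prod_nonneg fun i _ => Int.natCast_nonneg _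
  have h3 : 1 ≤ S k 3 := by
    have hmem : T ∈ Finset.powersetCard 3 (Finset.univ : Finset (Fin 5)) := by
      simp [Finset.mem_powersetCard, hTcard]
    have hle : (1 : ℤ) ≤ ∏ i ∈ T, (k i : ℤ) := by
      calc (1:ℤ) = ∏ _i ∈ T, (1:ℤ) := by simp
        _ ≤ ∏ i ∈ T, (k i : ℤ) := Finset.prod_le_prod (fun i _ => zero_le_one) hTpos
    have := Finset.single_le_sum
      (f := fun P => ∏ i ∈ P, (k i : ℤ))
      (fun P _ => Finset.prod_nonneg fun i _ => Int.natCast_nonneg _) hmem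
    calc (1 : ℤ) ≤ _ := hle
      _ ≤ S k 3 := this
  have h1 : 3 ≤ S k 1 := by
    have hS1 : S k 1 = ∑ i : Fin 5, (k i : ℤ) := by
      simp [S, Finset.powersetCard_one]
    rw [hS1]
    calc (3 : ℤ) = ∑ _i ∈ T, (1 : ℤ) := by simp [hTcard]
      _ ≤ ∑ i ∈ T, (k i : ℤ) := Finset.sum_le_sum hTpos
      _ ≤ ∑ i : Fin 5, (k i : ℤ) :=
        Finset.sum_le_sum_of_subset_of_nonneg (Finset.subset_univ T)
          (fun i _ _ => Int.natCast_nonneg _)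
  nlinarith [mul_nonneg (by linarith : (0:ℤ) ≤ S k 1 - 3) h2,
    mul_nonneg (by linarith : (0:ℤ) ≤ S k 1 - 3) (by linarith : (0:ℤ) ≤ S k 1 + 1)]
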